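/- Let (g, ·) be a finite-dimensional pre-Lie algebra and let r ∈ g ⊗ g be symmetric (r ∈ Sym²(g)) with associated map r^♯: g* → g, ⟨r^♯(ξ), η⟩ = r(ξ, η). If r is an s-matrix (i.e. r^♯ is an 𝒪-operator on the bimodule (g*; ad*, −R*)), then ξ ·^{r^♯} η := ad*_{r^♯(ξ)} η − R*_{r^♯(η)} ξ defines a pre-Lie algebra structure on g*, and r^♯ is a pre-Lie homomorphism from (g*, ·^{r^♯}) to (g, ·). -/
import Mathlib


/-- The pre-Lie identity for a multiplication on an additive group. -/
def IsPreLieMul {A : Type*} [AddCommGroup A] (f : A → A → A) : Prop :=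
  ∀ x y z : A, f (f x y) z - f x (f y z) = f (f y x) z - f y (f x z)

/-- Let `(g, ·)` be a finite-dimensional pre-Lie algebra and
`r ∈ Sym²(g)` an s-matrix, i.e. `r^♯ : g* → g` is symmetric
(`⟨r^♯ξ, η⟩ = ⟨ξ, r^♯η⟩`) and is an 𝒪-operator on `(g*; ad*, −R*)`, where
`(ad*_x ξ)(y) = −ξ([x,y])` and `(−R*_x ξ)(y) = ξ(y·x)`.  Then
`ξ ·^{r^♯} η := ad*_{r^♯ξ} η − R*_{r^♯η} ξ` is a pre-Lie structure on `g*` and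
`r^♯` is a pre-Lie homomorphism from `(g*, ·^{r^♯})` to `(g, ·)`. -/
theorem s_matrix_induced_preLie_on_dual
    {𝕜 G : Type*} [Field 𝕜] [CharZero 𝕜] [AddCommGroup G] [Module 𝕜 G]
    [FiniteDimensional 𝕜 G]
    (m : G →ₗ[𝕜] G →ₗ[𝕜] G)
    (hm : ∀ x y z : G, m (m x y) z - m x (m y z) = m (m y x) z - m y (m x z))
    (rs : Module.Dual 𝕜 G →ₗ[𝕜] G)
    (hsym : ∀ ξ η : Module.Dual 𝕜 G, η (rs ξ) = ξ (rs η))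
    (hO : ∀ ξ η : Module.Dual 𝕜 G,
      m (rs ξ) (rs η) =
        rs (-((m (rs ξ) - m.flip (rs ξ)).dualMap η) +
          (m.flip (rs η)).dualMap ξ)) :
    IsPreLieMul (fun ξ η : Module.Dual 𝕜 G =>
        -((m (rs ξ) - m.flip (rs ξ)).dualMap η) + (m.flip (rs η)).dualMap ξ) ∧
      ∀ ξ η : Module.Dual 𝕜 G,
        rs (-((m (rs ξ) - m.flip (rs ξ)).dualMap η) +
            (m.flip (rs η)).dualMap ξ) = m (rs ξ) (rs η) := by
  refine ⟨?_, fun ξ η => (hO ξ η).symm⟩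
  intro ξ η ζ
  simp only []
  rw [← hO ξ η, ← hO η ζ, ← hO η ξ, ← hO ξ ζ]
  ext y
  have h1 := congrArg ξ (hm y (rs η) (rs ζ))
  have h2 := congrArg η (hm (rs ξ) y (rs ζ))
  have h3 := congrArg ζ (hm (rs ξ) (rs η) y)
  have h4 := congrArg ζ (hm y (rs ξ) (rs η))
  have h5 := congrArg ζ (hm y (rs η) (rs ξ))
  simp only [map_sub] at h1 h2 h3 h4 h5
  simp only [LinearMap.sub_apply, LinearMap.add_apply, LinearMap.neg_apply,
    LinearMap.dualMap_apply, LinearMap.flip_apply, map_sub, map_add, map_neg]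
  linear_combination h1 + h2 - h3 - h4 + h5
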